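/- Let R be a commutative Noetherian ring, let t ∈ R be an element such that R is (t)-adically complete, and let M be a finitely generated R-module on which multiplication by t is injective. Then M is a projective R-module if and only if M/tM is a projective R/tR-module. -/
import Mathlib

open Function Submodule TensorProduct in
set_option maxHeartbeats 1000000 in
/-- Let `R` be a commutative Noetherian ring, `t ∈ R` such that `R` is
`(t)`-adically complete, and `M` a finitely generated `R`-module on which multiplication
by `t` is injective. Then `M` is projective over `R` iff `M/tM` is projective over `R/tR`. -/
theorem stmt_17 (R : Type*) [CommRing R] [IsNoetherianRing R] (t : R)
    [IsAdicComplete (Ideal.span {t}) R]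
    (M : Type*) [AddCommGroup M] [Module R M] [Module.Finite R M]
    (hinj : Function.Injective fun x : M => t • x) :
    Module.Projective R M ↔
      Module.Projective (R ⧸ Ideal.span {t})
        (M ⧸ (Ideal.span {t} • (⊤ : Submodule R M))) := by
  constructor
  · intro hp
    have : Module.Projective (R ⧸ Ideal.span {t}) ((R ⧸ Ideal.span {t}) ⊗[R] M) := inferInstance
    exact Module.Projective.of_equiv
      ((quotTensorEquivQuotSMul M (Ideal.span {t})).extendScalarsOfSurjective
        Ideal.Quotient.mk_surjective)
  intro hq
  set I := Ideal.span {t} with hI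
  have htI : t ∈ I := Ideal.mem_span_singleton_self t
  obtain ⟨n, f, hf⟩ := Module.Finite.exists_fin' R M
  set F := Fin n → R with hF
  set K := LinearMap.ker f with hK
  set π : F →ₗ[R] F ⧸ (I • ⊤ : Submodule R F) := (I • ⊤ : Submodule R F).mkQ with hπ
  set πM : M →ₗ[R] M ⧸ (I • ⊤ : Submodule R M) := (I • ⊤ : Submodule R M).mkQ with hπM
  have hcond : (I • ⊤ : Submodule R F) ≤ (I • ⊤ : Submodule R M).comap f := by
    rw [hI, Submodule.ideal_span_singleton_smul, Submodule.ideal_span_singleton_smul]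
    rintro x ⟨y, -, rfl⟩
    exact ⟨f y, mem_top, (f.map_smul t y).symm⟩
  set fb : (F ⧸ (I • ⊤ : Submodule R F)) →ₗ[R] (M ⧸ (I • ⊤ : Submodule R M)) :=
    Submodule.mapQ _ _ f hcond with hfb
  have hfbπ : ∀ x : F, fb (π x) = πM (f x) := fun x => rfl
  have hfbsurj : Surjective fb := by
    intro z
    obtain ⟨m, rfl⟩ := Submodule.mkQ_surjective _ z
    obtain ⟨x, rfl⟩ := hf m
    exact ⟨π x, hfbπ x⟩
  set fbar := fb.extendScalarsOfSurjective (S := R ⧸ I) Ideal.Quotient.mk_surjective with hfbar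
  obtain ⟨σb, hσb⟩ := Module.projective_lifting_property fbar LinearMap.id hfbsurj
  have hσb' : ∀ z, fb (σb z) = z := fun z => DFunLike.congr_fun hσb z
  -- the map h = π - σb ∘ πM ∘ f lands in the image of K
  set h : F →ₗ[R] (F ⧸ (I • ⊤ : Submodule R F)) :=
    π - (σb.restrictScalars R).comp (πM.comp f) with hh
  set Kbar : Submodule R (F ⧸ (I • ⊤ : Submodule R F)) := K.map π with hKbar
  have hker : LinearMap.ker fb ≤ Kbar := by
    intro y hy
    obtain ⟨x, rfl⟩ := Submodule.mkQ_surjective _ y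
    have hx0 : πM (f x) = 0 := by rw [← hfbπ]; exact hy
    have hx : f x ∈ (I • ⊤ : Submodule R M) := (Submodule.Quotient.mk_eq_zero _).mp hx0
    rw [hI, Submodule.ideal_span_singleton_smul] at hx
    obtain ⟨m, -, hm⟩ := hx
    obtain ⟨x', rfl⟩ := hf m
    refine ⟨x - t • x', ?_, ?_⟩
    · have hm' : t • f x' = f x := hm
      simp [hK, LinearMap.mem_ker, map_sub, map_smul, hm']
    · have hmem : (t • x' : F) ∈ (I • ⊤ : Submodule R F) :=
        Submodule.smul_mem_smul htI mem_top
      have hz : π (t • x') = 0 := (Submodule.Quotient.mk_eq_zero _).mpr hmem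
      rw [map_sub, hz, sub_zero]
  have hhmem : ∀ x : F, h x ∈ Kbar := by
    intro x
    apply hker
    simp [hh, LinearMap.mem_ker, map_sub, hfbπ, hσb']
  set h' : F →ₗ[R] Kbar := h.codRestrict Kbar hhmem with hh'
  set πK : K →ₗ[R] Kbar :=
    (π.comp K.subtype).codRestrict Kbar (fun k => ⟨(k : F), k.2, rfl⟩) with hπK
  have hπKsurj : Surjective πK := by
    rintro ⟨y, x, hx, rfl⟩
    exact ⟨⟨x, hx⟩, Subtype.ext rfl⟩
  obtain ⟨s, hs⟩ := Module.projective_lifting_property πK h' hπKsurj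
  have hs' : ∀ x : F, π ((s x : F)) = h x := fun x =>
    congrArg Subtype.val (DFunLike.congr_fun hs x)
  set φ : K →ₗ[R] K := s.comp K.subtype with hφ
  -- for k ∈ K, k - φ k = t • k' for some k' ∈ K
  have hkey : ∀ k : K, ∃ k' : K, (k : K) = φ k - t • k' := by
    intro k
    have h1 : π ((s (k : F) : F)) = π (k : F) := by
      rw [hs' (k : F)]
      have : f (k : F) = 0 := k.2
      simp [hh, this]
    have h2 : ((s (k : F) : F) - (k : F)) ∈ (I • ⊤ : Submodule R F) := by
      rwa [← Submodule.Quotient.mk_eq_zero, Submodule.Quotient.mk_sub, sub_eq_zero]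
    rw [hI, Submodule.ideal_span_singleton_smul] at h2
    obtain ⟨y, -, hy0⟩ := h2
    have hy : (t • y : F) = ↑(s (k : F)) - ↑k := hy0
    have hyK : y ∈ K := by
      have h3 : t • f y = 0 := by
        have := congrArg f hy
        rw [map_smul, map_sub] at this
        have hfs : f ((s (k : F) : F)) = 0 := (s (k : F)).2
        have hfk : f (k : F) = 0 := k.2
        rw [hfs, hfk, sub_zero] at this
        exact this
      have := hinj (a₁ := f y) (a₂ := 0) (by simpa using h3)
      simpa [hK, LinearMap.mem_ker] using this
    refine ⟨⟨y, hyK⟩, ?_⟩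
    apply Subtype.ext
    have : (φ k : F) = (s (k : F) : F) := rfl
    push_cast [this]
    rw [hy, sub_sub_cancel]
  -- Nakayama: φ is surjective
  have hNN : (⊤ : Submodule R K) ≤ LinearMap.range φ ⊔ (I • ⊤ : Submodule R K) := by
    intro k _
    obtain ⟨k', hk'⟩ := hkey k
    rw [hk']
    exact Submodule.sub_mem _ (Submodule.mem_sup_left ⟨k, rfl⟩)
      (Submodule.mem_sup_right (Submodule.smul_mem_smul htI mem_top))
  have : IsNoetherian R F := inferInstance
  have hNoethK : IsNoetherian R K := isNoetherian_submodule' K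
  have hKfg : (⊤ : Submodule R K).FG := IsNoetherian.noetherian ⊤
  have hrange : (⊤ : Submodule R K) ≤ LinearMap.range φ :=
    Submodule.le_of_le_smul_of_le_jacobson_bot hKfg (IsAdicComplete.le_jacobson_bot I) hNN
  have hφsurj : Surjective φ := by
    rw [← LinearMap.range_eq_top]
    exact top_le_iff.mp hrange
  have hφinj : Injective φ := IsNoetherian.injective_of_surjective_endomorphism φ hφsurj
  set ψ : K ≃ₗ[R] K := LinearEquiv.ofBijective φ ⟨hφinj, hφsurj⟩ with hψ
  set r : F →ₗ[R] K := ψ.symm.toLinearMap.comp s with hr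
  set q : F →ₗ[R] F := LinearMap.id - K.subtype.comp r with hq2
  have hKq : K ≤ LinearMap.ker q := by
    intro x hx
    have h1 : r x = ⟨x, hx⟩ := by
      have : s x = φ ⟨x, hx⟩ := rfl
      rw [hr]
      simp only [LinearMap.comp_apply, this]
      exact ψ.symm_apply_apply ⟨x, hx⟩ -- ψ coercion?
    simp [hq2, LinearMap.mem_ker, h1]
  set e := f.quotKerEquivOfSurjective hf with he
  set σ : M →ₗ[R] F := (K.liftQ q hKq).comp (e.symm : M →ₗ[R] F ⧸ LinearMap.ker f) with hσ
  have hsplit : f.comp σ = LinearMap.id := by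
    ext m
    obtain ⟨x, rfl⟩ := hf m
    have h1 : e.symm (f x) = Submodule.Quotient.mk x := by
      apply e.injective
      rw [e.apply_symm_apply]
      rfl
    simp only [LinearMap.comp_apply, LinearMap.id_apply, hσ, LinearMap.coe_comp, comp_apply,
      LinearEquiv.coe_coe, h1]
    rw [Submodule.liftQ_apply]
    simp [hq2, map_sub]
  exact Module.Projective.of_split σ f hsplit
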